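/- Let μ and ν be *-distributions on ℂ⟨Z_l, Z_{l*}, Z_r, Z_{r*}⟩ satisfying: (1) μ(Z_w) = ν(Z_w) = 0 for every w ∈ W⁺ that is not mixed alternating; (2) for every mixed alternating word w with canonical factorization determining the bi-interval partition π_w = {J₁, …, J_d}, one has μ(Z_w) = μ(Z_{w|_{J₁}}) ⋯ μ(Z_{w|_{J_d}}) and ν(Z_w) = ν(Z_{w|_{J₁}}) ⋯ ν(Z_{w|_{J_d}}); (3) B^{(μ)}_{χ_w}(Z_w) = B^{(ν)}_{χ_w}(Z_w) for every alternating word w ∈ W⁺, where B^{(μ)} and B^{(ν)} denote the Boolean (l,r)-cumulants of μ and ν. Then μ(Z_w) = ν(Z_w) for all w ∈ W⁺, i.e., μ = ν. -/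

import Mathlib

open scoped BigOperators Pointwise

/-- Rank realizing the χ-order: left indices in increasing order, then right indices
in decreasing order. `true` stands for `l`, `false` for `r`. -/
def chiRank {n : ℕ} (χ : Fin n → Bool) (i : Fin n) : ℕ :=
  if χ i then (i : ℕ) else 2 * n - (i : ℕ)

/-- The strict order `≺_χ`. -/
def chiLT {n : ℕ} (χ : Fin n → Bool) (i j : Fin n) : Prop :=
  chiRank χ i < chiRank χ j

/-- A finset is a χ-interval iff it is order-convex for `≺_χ`. -/
def IsChiInterval {n : ℕ} (χ : Fin n → Bool) (V : Finset (Fin n)) : Prop :=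
  ∀ i j k : Fin n, i ∈ V → k ∈ V → chiLT χ i j → chiLT χ j k → j ∈ V

/-- A set partition of `{1, …, n}` encoded as a finset of (nonempty) blocks. -/
def IsPartition {n : ℕ} (P : Finset (Finset (Fin n))) : Prop :=
  (∅ ∉ P) ∧ ∀ i : Fin n, ∃! V : Finset (Fin n), V ∈ P ∧ i ∈ V

open scoped Classical in
/-- The set of bi-interval partitions relative to χ. -/
noncomputable def BIset {n : ℕ} (χ : Fin n → Bool) : Finset (Finset (Finset (Fin n))) :=
  Finset.univ.filter (fun P => IsPartition P ∧ ∀ V ∈ P, IsChiInterval χ V)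

/-- `φ_V(a₁,…,aₙ)`: apply φ to the product of the `a_i`, `i ∈ V`, in increasing index order. -/
def phiV {A : Type*} [Monoid A] (φ : A → ℂ) {n : ℕ} (a : Fin n → A) (V : Finset (Fin n)) : ℂ :=
  φ ((V.sort (· ≤ ·)).map a).prod

/-- The Boolean (l,r)-cumulant `B_χ`. -/
noncomputable def Bcum {A : Type*} [Monoid A] (φ : A → ℂ) {n : ℕ} (χ : Fin n → Bool)
    (a : Fin n → A) : ℂ :=
  ∑ P ∈ BIset χ, (-1 : ℂ) ^ (P.card - 1) * ∏ V ∈ P, phiV φ a V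

/-- The list of indices `1, …, n` sorted in the `≺_χ` order. -/
def chiSorted {n : ℕ} (χ : Fin n → Bool) : List (Fin n) :=
  (List.finRange n).mergeSort (fun i j => chiRank χ i ≤ chiRank χ j)

/-- Letters of the alphabet `{l, l*, r, r*}`: first component `true` = left (`l`-type),
second component `true` = starred. -/
abbrev Letter := Bool × Bool

/-- The left/right shape of a word. -/
def chiW {n : ℕ} (w : Fin n → Letter) : Fin n → Bool := fun i => (w i).1

/-- The monomial `Z_w` in the free algebra on the four generators. -/
noncomputable def Zword {n : ℕ} (w : Fin n → Letter) : FreeAlgebra ℂ Letter :=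
  (List.ofFn (fun i => FreeAlgebra.ι ℂ (w i))).prod

/-- The monomial `Z_{w|_V}`, the letters of `w` at positions in `V`,
multiplied in increasing index order. -/
noncomputable def ZwordOn {n : ℕ} (w : Fin n → Letter) (V : Finset (Fin n)) :
    FreeAlgebra ℂ Letter :=
  ((V.sort (· ≤ ·)).map (fun i => FreeAlgebra.ι ℂ (w i))).prod

/-- The Boolean (l,r)-cumulant `B_{χ_w}(Z_w)` of a `*`-distribution `μ` at the word `w`. -/
noncomputable def BcumW (μ : FreeAlgebra ℂ Letter → ℂ) {n : ℕ} (w : Fin n → Letter) : ℂ :=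
  Bcum μ (chiW w) (fun i => FreeAlgebra.ι ℂ (w i))

/-- The sequence of star-parities of the letters of `w`, rearranged in the `≺_{χ_w}` order. -/
def wordStarSeq {n : ℕ} (w : Fin n → Letter) : List Bool :=
  (chiSorted (chiW w)).map (fun i => (w i).2)

/-- A word is alternating: even length, and in the rearranged word starred and unstarred
letters alternate (all `l`-letters automatically precede all `r`-letters in the
rearranged word). -/
def AlternatingW {n : ℕ} (w : Fin n → Letter) : Prop :=
  Even n ∧ (wordStarSeq w).Chain' (· ≠ ·)

/-- `chunks` is the canonical factorization of the rearranged word of `w`: a concatenation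
of nonempty consecutive blocks, each of alternating shape (even length, star-parities
alternating), with the classes (star-parity of the first letter) of consecutive blocks
distinct. -/
def IsCanonFact {n : ℕ} (w : Fin n → Letter) (chunks : List (List (Fin n))) : Prop :=
  chunks.flatten = chiSorted (chiW w) ∧
  (∀ c ∈ chunks, c ≠ [] ∧ Even c.length ∧ (c.map (fun i => (w i).2)).Chain' (· ≠ ·)) ∧
  chunks.Chain' (fun c c' =>
    (c.map (fun i => (w i).2)).head? ≠ (c'.map (fun i => (w i).2)).head?)

/-- A word is mixed alternating if its rearranged word admits a canonical factorization
into blocks of alternating shape with alternating classes. -/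
def MixedAlternatingW {n : ℕ} (w : Fin n → Letter) : Prop :=
  ∃ chunks : List (List (Fin n)), IsCanonFact w chunks


section AuxLemmas

lemma zword_zero (w : Fin 0 → Letter) : Zword w = 1 := by
  simp [Zword]

lemma zwordOn_eq_zword {n : ℕ} (w : Fin n → Letter) (V : Finset (Fin n)) :
    ZwordOn w V =
      Zword (fun i : Fin (V.sort (· ≤ ·)).length => w ((V.sort (· ≤ ·)).get i)) := by
  unfold ZwordOn Zword
  congr 1
  conv_lhs => rw [← List.ofFn_getElem (xs := V.sort (· ≤ ·))]
  rw [List.map_ofFn]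
  rfl

lemma zwordOn_univ {n : ℕ} (w : Fin n → Letter) : ZwordOn w Finset.univ = Zword w := by
  unfold ZwordOn Zword
  rw [Fin.sort_univ, ← List.ofFn_eq_map]

lemma chiSorted_length {n : ℕ} (χ : Fin n → Bool) : (chiSorted χ).length = n := by
  rw [chiSorted, List.length_mergeSort, List.length_finRange]

lemma list_le_sum {x : ℕ} : ∀ {l : List ℕ}, x ∈ l → x ≤ l.sum := by
  intro l
  induction l with
  | nil => intro h; simp at h
  | cons a t ih =>
    intro h
    rcases List.mem_cons.mp h with rfl | h
    · simp
    · have := ih h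
      simp only [List.sum_cons]
      omega

lemma list_one_le_sum {l : List ℕ} (h1 : ∀ x ∈ l, 1 ≤ x) (hne : l ≠ []) : 1 ≤ l.sum := by
  cases l with
  | nil => exact absurd rfl hne
  | cons a t =>
    have := h1 a List.mem_cons_self
    simp only [List.sum_cons]
    omega

lemma list_mem_lt_sum {l : List ℕ} (h1 : ∀ x ∈ l, 1 ≤ x) (h2 : 2 ≤ l.length)
    {x : ℕ} (hx : x ∈ l) : x < l.sum := by
  cases l with
  | nil => simp at hx
  | cons a t =>
    have htne : t ≠ [] := by
      intro h; subst h; simp at h2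
    have ht1 : ∀ y ∈ t, 1 ≤ y := fun y hy => h1 y (List.mem_cons_of_mem _ hy)
    have hts : 1 ≤ t.sum := list_one_le_sum ht1 htne
    rcases List.mem_cons.mp hx with rfl | hx
    · simp only [List.sum_cons]; omega
    · have := list_le_sum hx
      have ha := h1 a List.mem_cons_self
      simp only [List.sum_cons]
      omega

lemma singleton_univ_mem_BIset {n : ℕ} (hn : 1 ≤ n) (χ : Fin n → Bool) :
    ({Finset.univ} : Finset (Finset (Fin n))) ∈ BIset χ := by
  have : Nonempty (Fin n) := ⟨⟨0, hn⟩⟩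
  simp only [BIset, Finset.mem_filter, Finset.mem_univ, true_and]
  refine ⟨⟨?_, ?_⟩, ?_⟩
  · intro h
    rw [Finset.mem_singleton] at h
    exact (Finset.univ_nonempty (α := Fin n)).ne_empty h.symm
  · intro i
    refine ⟨Finset.univ, ⟨Finset.mem_singleton_self _, Finset.mem_univ _⟩, ?_⟩
    intro V hV
    exact Finset.mem_singleton.mp hV.1
  · intro V hV
    rw [Finset.mem_singleton] at hV
    subst hV
    intro i j k _ _ _ _
    exact Finset.mem_univ _

lemma partition_eq_singleton_univ {n : ℕ} {P : Finset (Finset (Fin n))}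
    (hP : IsPartition P) (hu : Finset.univ ∈ P) : P = {Finset.univ} := by
  apply Finset.eq_singleton_iff_unique_mem.mpr
  refine ⟨hu, ?_⟩
  intro V hV
  have hVne : V.Nonempty := by
    rw [Finset.nonempty_iff_ne_empty]
    intro h; subst h; exact hP.1 hV
  obtain ⟨i, hi⟩ := hVne
  obtain ⟨B, _, hBuniq⟩ := hP.2 i
  exact (hBuniq V ⟨hV, hi⟩).trans (hBuniq Finset.univ ⟨hu, Finset.mem_univ _⟩).symm

lemma block_card_lt {n : ℕ} {P : Finset (Finset (Fin n))} {V : Finset (Fin n)}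
    (hP : IsPartition P) (hne : P ≠ {Finset.univ}) (hV : V ∈ P) : V.card < n := by
  have hle : V.card ≤ n := by
    have := Finset.card_le_univ V
    simpa using this
  rcases lt_or_eq_of_le hle with h | h
  · exact h
  · exfalso
    have : V = Finset.univ := by
      apply (Finset.card_eq_iff_eq_univ V).mp
      rw [Fintype.card_fin]; exact h
    subst this
    exact hne (partition_eq_singleton_univ hP hV)

end AuxLemmas

set_option maxHeartbeats 1000000 in
/-- Two `*`-distributions that vanish off mixed alternating words, factorize over the
canonical factorization of mixed alternating words, and have the same Boolean
(l,r)-cumulants at alternating words, are equal. -/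
theorem dist_eq_of_same_alternating_cumulants
    (μ ν : FreeAlgebra ℂ Letter →ₗ[ℂ] ℂ) (hμ1 : μ 1 = 1) (hν1 : ν 1 = 1)
    (h1 : ∀ n : ℕ, 1 ≤ n → ∀ w : Fin n → Letter, ¬ MixedAlternatingW w →
      μ (Zword w) = 0 ∧ ν (Zword w) = 0)
    (h2 : ∀ n : ℕ, 1 ≤ n → ∀ w : Fin n → Letter, ∀ chunks : List (List (Fin n)),
      IsCanonFact w chunks →
        μ (Zword w) = (chunks.map (fun c => μ (ZwordOn w c.toFinset))).prod ∧
        ν (Zword w) = (chunks.map (fun c => ν (ZwordOn w c.toFinset))).prod)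
    (h3 : ∀ n : ℕ, 1 ≤ n → ∀ w : Fin n → Letter, AlternatingW w →
      BcumW (fun z => μ z) w = BcumW (fun z => ν z) w) :
    μ = ν := by
  classical
  -- Step 1: the key induction on word length
  have key : ∀ n : ℕ, ∀ w : Fin n → Letter, μ (Zword w) = ν (Zword w) := by
    intro n
    induction n using Nat.strong_induction_on with
    | _ n IH =>
    intro w
    rcases Nat.eq_zero_or_pos n with hn | hn
    · subst hn
      rw [zword_zero, hμ1, hν1]
    · -- helper: IH applied to restricted words
      have IHon : ∀ V : Finset (Fin n), V.card < n →
          μ (ZwordOn w V) = ν (ZwordOn w V) := by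
        intro V hV
        rw [zwordOn_eq_zword]
        apply IH
        rw [Finset.length_sort]
        exact hV
      by_cases hma : MixedAlternatingW w
      · obtain ⟨chunks, hcf⟩ := hma
        obtain ⟨hflat, hblocks, hchain⟩ := hcf
        match chunks, hflat, hblocks, hchain with
        | [], hflat, _, _ =>
          exfalso
          have : (0 : ℕ) = n := by
            have := congrArg List.length hflat
            simpa [chiSorted_length] using this
          omega
        | [c], hflat, hblocks, _ =>
          -- single chunk: w is alternating; use the cumulant hypothesis
          have hc : c = chiSorted (chiW w) := by simpa using hflat
          obtain ⟨hcne, hceven, hcchain⟩ := hblocks c (by simp)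
          have halt : AlternatingW w := by
            constructor
            · have : c.length = n := by rw [hc, chiSorted_length]
              rwa [this] at hceven
            · rw [wordStarSeq, ← hc]
              exact hcchain
          have hB := h3 n hn w halt
          set χ := chiW w with hχ
          have hmemU := singleton_univ_mem_BIset hn χ
          have hBμ : BcumW (fun z => μ z) w =
              ∑ P ∈ BIset χ, (-1 : ℂ) ^ (P.card - 1) * ∏ V ∈ P, μ (ZwordOn w V) := by
            simp only [BcumW, Bcum, phiV, ZwordOn, hχ]
          have hBν : BcumW (fun z => ν z) w =
              ∑ P ∈ BIset χ, (-1 : ℂ) ^ (P.card - 1) * ∏ V ∈ P, ν (ZwordOn w V) := by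
            simp only [BcumW, Bcum, phiV, ZwordOn, hχ]
          have hsplitμ : BcumW (fun z => μ z) w =
              μ (Zword w) + ∑ P ∈ (BIset χ).erase {Finset.univ},
                (-1 : ℂ) ^ (P.card - 1) * ∏ V ∈ P, μ (ZwordOn w V) := by
            rw [hBμ, ← Finset.add_sum_erase _ _ hmemU]
            congr 1
            simp [zwordOn_univ]
          have hsplitν : BcumW (fun z => ν z) w =
              ν (Zword w) + ∑ P ∈ (BIset χ).erase {Finset.univ},
                (-1 : ℂ) ^ (P.card - 1) * ∏ V ∈ P, ν (ZwordOn w V) := by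
            rw [hBν, ← Finset.add_sum_erase _ _ hmemU]
            congr 1
            simp [zwordOn_univ]
          have hsums : ∑ P ∈ (BIset χ).erase {Finset.univ},
                (-1 : ℂ) ^ (P.card - 1) * ∏ V ∈ P, μ (ZwordOn w V) =
              ∑ P ∈ (BIset χ).erase {Finset.univ},
                (-1 : ℂ) ^ (P.card - 1) * ∏ V ∈ P, ν (ZwordOn w V) := by
            apply Finset.sum_congr rfl
            intro P hP
            rw [Finset.mem_erase] at hP
            obtain ⟨hPne, hPmem⟩ := hP
            have hPpart : IsPartition P := by
              simp only [BIset, Finset.mem_filter, Finset.mem_univ, true_and] at hPmem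
              exact hPmem.1
            congr 1
            apply Finset.prod_congr rfl
            intro V hV
            exact IHon V (block_card_lt hPpart hPne hV)
          have : μ (Zword w) + ∑ P ∈ (BIset χ).erase {Finset.univ},
                (-1 : ℂ) ^ (P.card - 1) * ∏ V ∈ P, μ (ZwordOn w V) =
              ν (Zword w) + ∑ P ∈ (BIset χ).erase {Finset.univ},
                (-1 : ℂ) ^ (P.card - 1) * ∏ V ∈ P, μ (ZwordOn w V) := by
            conv_rhs => rw [hsums]
            rw [← hsplitμ, ← hsplitν, hB]
          exact add_right_cancel this
        | c1 :: c2 :: rest, hflat, hblocks, hchain =>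
          -- at least two chunks: use the factorization hypothesis
          set chunks := c1 :: c2 :: rest with hchunks
          have hcf' : IsCanonFact w chunks := ⟨hflat, hblocks, hchain⟩
          obtain ⟨hμ2, hν2⟩ := h2 n hn w chunks hcf'
          rw [hμ2, hν2]
          congr 1
          apply List.map_congr_left
          intro c hcmem
          apply IHon
          have hlen : c.length < n := by
            have hn' : n = (chunks.map List.length).sum := by
              have := congrArg List.length hflat
              rw [List.length_flatten, chiSorted_length] at this
              omega
            have hlt : c.length < (chunks.map List.length).sum := by
              apply list_mem_lt_sum
              · intro x hx
                rw [List.mem_map] at hx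
                obtain ⟨c', hc', rfl⟩ := hx
                have := (hblocks c' hc').1
                cases c' with
                | nil => exact absurd rfl this
                | cons a t => simp
              · simp [hchunks]
              · exact List.mem_map_of_mem (f := List.length) hcmem
            omega
          calc c.toFinset.card ≤ c.length := List.toFinset_card_le c
            _ < n := hlen
      · obtain ⟨hμ0, hν0⟩ := h1 n hn w hma
        rw [hμ0, hν0]
  -- Step 2: monomials span the free algebra
  set M : Set (FreeAlgebra ℂ Letter) :=
    {x | ∃ l : List Letter, x = (l.map (FreeAlgebra.ι ℂ)).prod} with hM
  have hMM : M * M ⊆ M := by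
    rintro z hz
    rw [Set.mem_mul] at hz
    obtain ⟨x, hx, y, hy, rfl⟩ := hz
    obtain ⟨l1, rfl⟩ := hx
    obtain ⟨l2, rfl⟩ := hy
    exact ⟨l1 ++ l2, by simp⟩
  have hspan : ∀ x : FreeAlgebra ℂ Letter, x ∈ Submodule.span ℂ M := by
    have h0 : ∀ r : ℂ,
        (algebraMap ℂ (FreeAlgebra ℂ Letter)) r ∈ Submodule.span ℂ M := by
      intro r
      have h1' : (1 : FreeAlgebra ℂ Letter) ∈ Submodule.span ℂ M :=
        Submodule.subset_span ⟨[], by simp⟩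
      have := (Submodule.span ℂ M).smul_mem r h1'
      simpa [Algebra.algebraMap_eq_smul_one] using this
    have hι : ∀ x : Letter, FreeAlgebra.ι ℂ x ∈ Submodule.span ℂ M := by
      intro x
      exact Submodule.subset_span ⟨[x], by simp⟩
    have hmul : ∀ a b : FreeAlgebra ℂ Letter, a ∈ Submodule.span ℂ M →
        b ∈ Submodule.span ℂ M → a * b ∈ Submodule.span ℂ M := by
      intro a b ha hb
      have hSS : Submodule.span ℂ M * Submodule.span ℂ M ≤ Submodule.span ℂ M := by
        rw [Submodule.span_mul_span]
        exact Submodule.span_mono hMM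
      exact hSS (Submodule.mul_mem_mul ha hb)
    have hadd : ∀ a b : FreeAlgebra ℂ Letter, a ∈ Submodule.span ℂ M →
        b ∈ Submodule.span ℂ M → a + b ∈ Submodule.span ℂ M := by
      intro a b ha hb
      exact (Submodule.span ℂ M).add_mem ha hb
    exact fun x => FreeAlgebra.induction ℂ Letter h0 hι hmul hadd x
  -- Step 3: conclude
  apply LinearMap.ext
  intro x
  refine Submodule.span_induction ?_ ?_ ?_ ?_ (hspan x)
  · rintro y ⟨l, rfl⟩
    have hl : (l.map (FreeAlgebra.ι ℂ)).prod =
        Zword (fun i : Fin l.length => l.get i) := by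
      unfold Zword
      congr 1
      conv_lhs => rw [← List.ofFn_getElem (xs := l)]
      rw [List.map_ofFn]
      rfl
    rw [hl]
    exact key _ _
  · simp
  · intro a b _ _ ha hb
    simp [map_add, ha, hb]
  · intro r a _ ha
    simp [map_smul, ha]
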